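/- Let 𝔨 be the 3-dimensional Heisenberg Lie algebra with basis X₁,X₂,X₃ and only nonzero bracket [X₁,X₂] = −X₃. Define the linear map α: 𝔨 → 𝔰𝔩(4,ℝ) by α(x₁X₁+x₂X₂+x₃X₃) = the 4×4 matrix with rows (0,x₁,0,0), (x₁,0,0,0), (x₂,−x₂,−x₁,0), (x₃,x₃,−x₁,x₁). Then for all x = x₁X₁+x₂X₂+x₃X₃ and y = y₁X₁+y₂X₂+y₃X₃, the curvature [α(x),α(y)] − α([x,y]) equals 2(x₁y₂ − x₂y₁)·E₄₂, where E₄₂ is the elementary matrix with 1 in position (4,2) and 0 elsewhere. -/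

import Mathlib

open Matrix

noncomputable section

/-- The 3-dimensional Heisenberg bracket with [X₁,X₂] = −X₃ (in coordinates w.r.t. the basis
X₁, X₂, X₃). -/
def heisBr (x y : Fin 3 → ℝ) : Fin 3 → ℝ := ![0, 0, -(x 0 * y 1 - x 1 * y 0)]

/-- The extension α : 𝔨 → 𝔰𝔩(4,ℝ). -/
def αH (x : Fin 3 → ℝ) : Matrix (Fin 4) (Fin 4) ℝ :=
  !![0, x 0, 0, 0;
     x 0, 0, 0, 0;
     x 1, -(x 1), -(x 0), 0;
     x 2, x 2, -(x 0), x 0]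

set_option maxHeartbeats 2000000 in
theorem stmt1 :
    (∀ x : Fin 3 → ℝ, (αH x).trace = 0) ∧
    (∀ x y : Fin 3 → ℝ,
      αH x * αH y - αH y * αH x - αH (heisBr x y)
        = (2 * (x 0 * y 1 - x 1 * y 0)) • Matrix.single (3 : Fin 4) (1 : Fin 4) (1 : ℝ)) := by
  constructor
  · intro x
    simp [αH, Matrix.trace, Matrix.diag, Fin.sum_univ_four]
  · intro x y
    ext i j
    fin_cases i <;> fin_cases j <;>
      simp only [Matrix.sub_apply, Matrix.mul_apply, Fin.sum_univ_four, Matrix.smul_apply,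
        Matrix.single, Matrix.of_apply, αH, heisBr, smul_eq_mul,
        Matrix.cons_val_zero, Matrix.cons_val_one, Matrix.head_cons, Matrix.cons_val_two,
        Matrix.cons_val_three, Matrix.tail_cons, Matrix.head_fin_const, Fin.isValue,
        Matrix.cons_val', Matrix.empty_val', Matrix.cons_val_fin_one] <;>
      norm_num [Fin.ext_iff, show ((3 : Fin 4) : ℕ) = 3 from rfl] <;> ring
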